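/- For every constant c₁ > 0 there exists a constant C > 0 such that the following holds for all sufficiently large n a power of 2 and any Δ a power of two with 2 ≤ Δ ≤ log^{c₁} n and Δ < n. If A is a multiset of C·log log N elements chosen uniformly at random with replacement from [n]^d × [n]^d, then with probability at least 1 − 1/log⁴ N, for every coordinate s ∈ {1,…,d} the multiset A ⋆ (𝟎, e_s) is Δ-balanced in coordinate s. -/

import Mathlib

/- STATEMENT 5: For every constant c₁ > 0 there exists C > 0 such that for all sufficiently
   large n a power of 2 and any Δ a power of two with 2 ≤ Δ ≤ log^{c₁} n and Δ < n: if A is a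
   multiset of C·log log N elements chosen uniformly at random with replacement from
   [n]^d × [n]^d, then with probability ≥ 1 − 1/log⁴ N, for every s ∈ [d] the multiset
   A ⋆ (𝟎, e_s) is Δ-balanced in coordinate s. -/

open scoped BigOperators Classical
open Finset

/-- the ⋆ operation on pairs of vectors in [n]^d × [n]^d -/
def star {n d : ℕ} (a v : (Fin d → ZMod n) × (Fin d → ZMod n)) : Fin d → ZMod n :=
  fun i => a.1 i * v.1 i + a.2 i * v.2 i

/-- ω_Δ = e^{2πi/Δ} -/
noncomputable def rootΔ (Δ : ℕ) : ℂ := Complex.exp (2 * (Real.pi : ℂ) * Complex.I / (Δ : ℂ))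

/-- a multiset (given as a tuple Z) of elements of [n]^d is Δ-balanced in coordinate s:
    for every r ∈ {1,…,Δ−1}, at least a 49/100 fraction of the elements of
    {ω_Δ^{r·z_s} : z ∈ Z} lie in the half-plane {u : Re u ≤ 0}. -/
noncomputable def balanced {n d m : ℕ} (Δ : ℕ) (Z : Fin m → (Fin d → ZMod n)) (s : Fin d) :
    Prop :=
  ∀ r : ℕ, 1 ≤ r → r ≤ Δ - 1 →
    (49 / 100 : ℝ) * m ≤
      ((Finset.univ.filter
          (fun j : Fin m => ((rootΔ Δ) ^ (r * ((Z j) s).val)).re ≤ 0)).card : ℝ)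

lemma rootΔ_pow_self {Δ : ℕ} (h : Δ ≠ 0) : rootΔ Δ ^ Δ = 1 := by
  rw [rootΔ, ← Complex.exp_nat_mul]
  have hΔ : (Δ:ℂ) ≠ 0 := Nat.cast_ne_zero.mpr h
  rw [show (Δ:ℂ) * (2 * (Real.pi:ℂ) * Complex.I / (Δ:ℂ)) = 2 * (Real.pi:ℂ) * Complex.I by
    field_simp]
  exact Complex.exp_two_pi_mul_I

lemma rootΔ_pow_half {mΔ : ℕ} (h : 1 ≤ mΔ) : rootΔ (2^mΔ) ^ (2^(mΔ-1)) = -1 := by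
  rw [rootΔ, ← Complex.exp_nat_mul, ← Complex.exp_pi_mul_I]
  congr 1
  push_cast
  have h2 : ((2:ℂ))^mΔ = 2 * (2:ℂ)^(mΔ-1) := by
    rw [← pow_succ']
    congr 1
    omega
  rw [h2]
  have h3 : ((2:ℂ))^(mΔ-1) ≠ 0 := pow_ne_zero _ two_ne_zero
  field_simp

lemma rootΔ_pow_congr {Δ a b : ℕ} (h0 : Δ ≠ 0) (h : a ≡ b [MOD Δ]) :
    rootΔ Δ ^ a = rootΔ Δ ^ b := by
  rw [pow_eq_pow_mod a (rootΔ_pow_self h0), pow_eq_pow_mod b (rootΔ_pow_self h0),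
    show a % Δ = b % Δ from h]

lemma half_card {n d : ℕ} [NeZero n] {mn mΔ Δ r : ℕ} (hn : n = 2^mn) (hΔ : Δ = 2^mΔ)
    (hΔn : Δ < n) (h2 : 2 ≤ Δ) (hr1 : 1 ≤ r) (hr2 : r ≤ Δ - 1) (s : Fin d) :
    Fintype.card ((Fin d → ZMod n) × (Fin d → ZMod n)) ≤
      2 * (univ.filter (fun a : (Fin d → ZMod n) × (Fin d → ZMod n) =>
        ((rootΔ Δ) ^ (r * ((a.2 s).val))).re ≤ 0)).card := by
  classical
  have hΔ0 : Δ ≠ 0 := by omega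
  have hmΔ1 : 1 ≤ mΔ := by
    rcases Nat.eq_zero_or_pos mΔ with h | h
    · subst h; simp at hΔ; omega
    · exact h
  have hmn : mΔ < mn := by
    have h' : (2:ℕ)^mΔ < 2^mn := by rw [← hΔ, ← hn]; exact hΔn
    exact (Nat.pow_lt_pow_iff_right (by norm_num)).mp h'
  have hdvd : Δ ∣ n := by rw [hΔ, hn]; exact pow_dvd_pow 2 (le_of_lt hmn)
  obtain ⟨a, u, hu2, hru⟩ := Nat.exists_eq_pow_mul_and_not_dvd (show r ≠ 0 by omega) 2 (by norm_num)
  have hodd : Odd u := Nat.odd_iff.mpr (by omega)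
  have hu1 : 1 ≤ u := by rcases Nat.eq_zero_or_pos u with h | h
                         · exfalso; exact hu2 (by simp [h])
                         · exact h
  have ha : a < mΔ := by
    have h1 : 2^a ≤ r := by
      calc 2^a = 2^a * 1 := by ring
        _ ≤ 2^a * u := Nat.mul_le_mul_left _ hu1
        _ = r := hru.symm
    have h' : (2:ℕ)^a < 2^mΔ := by omega
    exact (Nat.pow_lt_pow_iff_right (by norm_num)).mp h'
  set c : ℕ := 2^(mΔ - 1 - a) with hc
  have hpow : 2^a * 2^(mΔ-1-a) = 2^(mΔ-1) := by rw [← pow_add]; congr 1; omega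
  have hrc : r * c = u * 2^(mΔ-1) := by
    calc r * c = u * (2^a * 2^(mΔ-1-a)) := by rw [hru, hc]; ring
      _ = u * 2^(mΔ-1) := by rw [hpow]
  have hminus : rootΔ Δ ^ (r * c) = -1 := by
    rw [hrc, pow_mul', hΔ, rootΔ_pow_half hmΔ1, hodd.neg_one_pow]
  have hcn : c < n := by
    have h' : (2:ℕ)^(mΔ-1-a) ≤ 2^mΔ := Nat.pow_le_pow_right (by norm_num) (by omega)
    omega
  have hkey : ∀ x : ZMod n, rootΔ Δ ^ (r * (x + (c:ZMod n)).val) = - (rootΔ Δ ^ (r * x.val)) := by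
    intro x
    have hval : (x + (c:ZMod n)).val = (x.val + c) % n := by
      rw [ZMod.val_add, ZMod.val_natCast, Nat.mod_eq_of_lt hcn]
    have hmod : r * (x + (c:ZMod n)).val ≡ r * x.val + r * c [MOD Δ] := by
      rw [hval]
      have h1 : (x.val + c) % n ≡ x.val + c [MOD n] := Nat.mod_modEq _ n
      have h2 : (x.val + c) % n ≡ x.val + c [MOD Δ] := h1.of_dvd hdvd
      calc r * ((x.val + c) % n) ≡ r * (x.val + c) [MOD Δ] := h2.mul_left r
        _ = r * x.val + r * c := by ring
    rw [rootΔ_pow_congr hΔ0 hmod, pow_add, hminus, mul_neg_one]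
  set P : (Fin d → ZMod n) × (Fin d → ZMod n) → Prop :=
    fun a => ((rootΔ Δ) ^ (r * ((a.2 s).val))).re ≤ 0 with hP
  have hTS : (univ.filter (fun a => ¬ P a)).card ≤ (univ.filter P).card := by
    apply Finset.card_le_card_of_injOn
      (fun p => (p.1, fun t => if t = s then p.2 t + (c:ZMod n) else p.2 t))
    · intro p hp
      simp only [coe_filter, Set.mem_setOf_eq, mem_filter, mem_univ, true_and] at hp ⊢
      rw [hP] at hp ⊢
      simp only [not_le] at hp
      simp only [eq_self_iff_true, if_true]
      rw [hkey (p.2 s), Complex.neg_re]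
      linarith
    · rintro ⟨p1, p2⟩ - ⟨q1, q2⟩ - h
      simp only [Prod.mk.injEq] at h ⊢
      obtain ⟨h1, h2⟩ := h
      refine ⟨h1, ?_⟩
      funext t
      have ht := congrFun h2 t
      by_cases hts : t = s
      · simp only [if_pos hts] at ht
        exact add_right_cancel ht
      · simpa [hts] using ht
  have hsplit : (univ.filter P).card + (univ.filter (fun a => ¬ P a)).card
      = Fintype.card ((Fin d → ZMod n) × (Fin d → ZMod n)) := by
    rw [Finset.card_filter_add_card_filter_not, Finset.card_univ]
  show Fintype.card ((Fin d → ZMod n) × (Fin d → ZMod n)) ≤ 2 * (univ.filter P).card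
  omega

set_option maxHeartbeats 2000000 in
lemma chernoff_count {Ω : Type*} [Fintype Ω] (p : Ω → Prop)
    (hS : Fintype.card Ω ≤ 2 * (univ.filter p).card) (m : ℕ) :
    ((univ.filter (fun A : Fin m → Ω => ¬ ((49/100 : ℝ) * m ≤
        ((univ.filter (fun j => p (A j))).card : ℝ)))).card : ℝ) ≤
      (1 - 1/20000)^m * (Fintype.card Ω)^m := by
  classical
  set t : ℝ := 10001/10000 with ht
  have ht1 : (1:ℝ) ≤ t := by norm_num [ht]
  have ht100 : (1:ℝ) ≤ t^100 := by norm_num [ht]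
  set w : Ω → ℝ := fun x => if p x then 1 else t^100 with hw
  have hw0 : ∀ x, 0 ≤ w x := by
    intro x; rw [hw]; dsimp only; split <;> positivity
  have hnum : ((1:ℝ) + t^100)/2 ≤ (1 - 1/20000) * t^51 := by norm_num [ht]
  have hsum : ∑ x : Ω, w x ≤ ((1 - 1/20000) * t^51) * (Fintype.card Ω) := by
    rw [hw]
    rw [Finset.sum_ite (fun _ => (1:ℝ)) (fun _ => t^100)]
    rw [Finset.sum_const, Finset.sum_const, nsmul_eq_mul, nsmul_eq_mul]
    have hXY : (univ.filter p).card + (univ.filter (fun x => ¬ p x)).card = Fintype.card Ω := by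
      rw [Finset.card_filter_add_card_filter_not, Finset.card_univ]
    have hX : ((univ.filter p).card : ℝ) + ((univ.filter (fun x => ¬ p x)).card : ℝ)
        = (Fintype.card Ω : ℝ) := by exact_mod_cast hXY
    have hY : 2 * ((univ.filter (fun x => ¬ p x)).card : ℝ) ≤ (Fintype.card Ω : ℝ) := by
      have h2 : (Fintype.card Ω : ℝ) ≤ 2 * ((univ.filter p).card : ℝ) := by exact_mod_cast hS
      linarith
    have hc0 : (0:ℝ) ≤ (Fintype.card Ω : ℝ) := by positivity
    have hy0 : (0:ℝ) ≤ ((univ.filter (fun x : Ω => ¬ p x)).card : ℝ) := by positivity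
    nlinarith
  have hprod : ∀ A : Fin m → Ω, (∏ j, w (A j))
      = t ^ (100 * (univ.filter (fun j => ¬ p (A j))).card) := by
    intro A
    rw [hw]
    dsimp only
    rw [Finset.prod_ite (fun _ => (1:ℝ)) (fun _ => t^100)]
    rw [Finset.prod_const_one, Finset.prod_const, one_mul, ← pow_mul]
  have hident : ∑ A : Fin m → Ω, ∏ j, w (A j) = (∑ x : Ω, w x)^m := by
    have h := Finset.prod_univ_sum (fun _ : Fin m => (univ : Finset Ω)) (fun _ x => w x)
    rw [Fintype.piFinset_univ] at h
    rw [← h, Finset.prod_const, Finset.card_univ, Fintype.card_fin]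
  have hbadY : ∀ A : Fin m → Ω, ¬ ((49/100 : ℝ) * m ≤
      ((univ.filter (fun j => p (A j))).card : ℝ)) →
      51 * m ≤ 100 * (univ.filter (fun j => ¬ p (A j))).card := by
    intro A hA
    push_neg at hA
    have hXY : (univ.filter (fun j => p (A j))).card
        + (univ.filter (fun j => ¬ p (A j))).card = m := by
      rw [Finset.card_filter_add_card_filter_not, Finset.card_univ, Fintype.card_fin]
    have h100 : 100 * (univ.filter (fun j => p (A j))).card < 49 * m := by
      have : (100 * (univ.filter (fun j => p (A j))).card : ℝ) < 49 * m := by push_cast; linarith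
      exact_mod_cast this
    omega
  set bad := univ.filter (fun A : Fin m → Ω => ¬ ((49/100 : ℝ) * m ≤
      ((univ.filter (fun j => p (A j))).card : ℝ))) with hbad
  have key : (bad.card : ℝ) * (t^51)^m ≤ (∑ x : Ω, w x)^m := by
    calc (bad.card : ℝ) * (t^51)^m = ∑ _A ∈ bad, (t^51)^m := by
          rw [Finset.sum_const, nsmul_eq_mul]
      _ ≤ ∑ A ∈ bad, ∏ j, w (A j) := by
          apply Finset.sum_le_sum
          intro A hA
          rw [hprod A, ← pow_mul]
          apply pow_le_pow_right₀ ht1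
          apply hbadY
          rw [hbad] at hA
          simpa using (Finset.mem_filter.mp hA).2
      _ ≤ ∑ A ∈ (univ : Finset (Fin m → Ω)), ∏ j, w (A j) :=
          by
          apply Finset.sum_le_sum_of_subset_of_nonneg (Finset.filter_subset _ _)
          intro A _ _
          exact Finset.prod_nonneg fun j _ => hw0 (A j)
      _ = _ := hident
  have hsumnn : (0:ℝ) ≤ ∑ x : Ω, w x := Finset.sum_nonneg fun x _ => hw0 x
  have hfinal : (∑ x : Ω, w x)^m ≤ (((1 - 1/20000) * t^51) * (Fintype.card Ω))^m :=
    pow_le_pow_left₀ hsumnn hsum m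
  have ht51 : (0:ℝ) < (t^51)^m := by positivity
  have hchain : (bad.card : ℝ) * (t^51)^m
      ≤ ((1 - 1/20000)^m * (Fintype.card Ω)^m) * (t^51)^m := by
    calc (bad.card : ℝ) * (t^51)^m ≤ (((1 - 1/20000) * t^51) * (Fintype.card Ω))^m :=
          key.trans hfinal
      _ = ((1 - 1/20000)^m * (Fintype.card Ω)^m) * (t^51)^m := by
          rw [mul_pow, mul_pow]; ring
  exact le_of_mul_le_mul_right hchain ht51

lemma main_count {Ω : Type*} [Fintype Ω] {d' Δ m : ℕ}
    (q : Fin d' → ℕ → Ω → Prop) (P : (Fin m → Ω) → Prop)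
    (hhalf : ∀ s r, 1 ≤ r → r ≤ Δ - 1 → Fintype.card Ω ≤ 2 * (univ.filter (q s r)).card)
    (hP : ∀ A : Fin m → Ω, ¬ P A → ∃ s r, 1 ≤ r ∧ r ≤ Δ - 1 ∧
      ¬ ((49/100 : ℝ) * m ≤ ((univ.filter (fun j => q s r (A j))).card : ℝ))) :
    ((univ.filter (fun A : Fin m → Ω => ¬ P A)).card : ℝ) ≤
      d' * Δ * ((1 - 1/20000)^m * (Fintype.card Ω)^m) := by
  classical
  have hsub : univ.filter (fun A : Fin m → Ω => ¬ P A) ⊆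
      (univ : Finset (Fin d')).biUnion (fun s => (Finset.Icc 1 (Δ-1)).biUnion (fun r =>
        univ.filter (fun A : Fin m → Ω =>
          ¬ ((49/100 : ℝ) * m ≤ ((univ.filter (fun j => q s r (A j))).card : ℝ))))) := by
    intro A hA
    rw [Finset.mem_filter] at hA
    obtain ⟨s, r, h1, h2, h3⟩ := hP A hA.2
    rw [Finset.mem_biUnion]
    refine ⟨s, mem_univ s, ?_⟩
    rw [Finset.mem_biUnion]
    exact ⟨r, Finset.mem_Icc.mpr ⟨h1, h2⟩, Finset.mem_filter.mpr ⟨mem_univ A, h3⟩⟩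
  have h1 : (univ.filter (fun A : Fin m → Ω => ¬ P A)).card ≤
      ∑ s : Fin d', ∑ r ∈ Finset.Icc 1 (Δ-1),
        (univ.filter (fun A : Fin m → Ω =>
          ¬ ((49/100 : ℝ) * m ≤ ((univ.filter (fun j => q s r (A j))).card : ℝ)))).card :=
    le_trans (Finset.card_le_card hsub)
      (le_trans Finset.card_biUnion_le (Finset.sum_le_sum fun s _ => Finset.card_biUnion_le))
  calc ((univ.filter (fun A : Fin m → Ω => ¬ P A)).card : ℝ)
      ≤ ∑ s : Fin d', ∑ r ∈ Finset.Icc 1 (Δ-1),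
          ((univ.filter (fun A : Fin m → Ω =>
            ¬ ((49/100 : ℝ) * m ≤ ((univ.filter (fun j => q s r (A j))).card : ℝ)))).card : ℝ) := by
        exact_mod_cast h1
    _ ≤ ∑ _s : Fin d', ∑ _r ∈ Finset.Icc 1 (Δ-1), ((1 - 1/20000:ℝ)^m * (Fintype.card Ω)^m) :=
        Finset.sum_le_sum fun s _ => Finset.sum_le_sum fun r hr =>
          chernoff_count (q s r) (hhalf s r (Finset.mem_Icc.mp hr).1 (Finset.mem_Icc.mp hr).2) m
    _ = (d' : ℝ) * ((Finset.Icc 1 (Δ-1)).card : ℝ) * ((1 - 1/20000:ℝ)^m * (Fintype.card Ω)^m) := by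
        rw [Finset.sum_const, Finset.sum_const, Finset.card_univ, Fintype.card_fin,
          nsmul_eq_mul, nsmul_eq_mul]
        ring
    _ ≤ (d' : ℝ) * (Δ : ℝ) * ((1 - 1/20000:ℝ)^m * (Fintype.card Ω)^m) := by
        have hc : ((Finset.Icc 1 (Δ-1)).card : ℝ) ≤ (Δ:ℝ) := by
          have h' : (Finset.Icc 1 (Δ-1)).card ≤ Δ := by
            rw [Nat.card_Icc, Nat.add_sub_cancel]
            exact Nat.sub_le Δ 1
          exact_mod_cast h'
        have hd0 : (0:ℝ) ≤ (d':ℝ) := by positivity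
        have hρK : (0:ℝ) ≤ (1 - 1/20000:ℝ)^m * (Fintype.card Ω)^m := by positivity
        exact mul_le_mul_of_nonneg_right (mul_le_mul_of_nonneg_left hc hd0) hρK

lemma final_ratio {α : Type*} [Fintype α] (P : α → Prop) (x : ℝ) (hx : 0 < x)
    (hcard : (0:ℝ) < (Fintype.card α : ℝ))
    (h : ((univ.filter (fun a => ¬ P a)).card : ℝ) * x ≤ (Fintype.card α : ℝ)) :
    1 - 1/x ≤ ((univ.filter P).card : ℝ) / (Fintype.card α : ℝ) := by
  classical
  have hsplit : (univ.filter P).card + (univ.filter (fun a => ¬ P a)).card = Fintype.card α := by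
    rw [Finset.card_filter_add_card_filter_not, Finset.card_univ]
  have hsplit' : ((univ.filter P).card : ℝ) + ((univ.filter (fun a => ¬ P a)).card : ℝ)
      = (Fintype.card α : ℝ) := by exact_mod_cast hsplit
  rw [le_div_iff₀ hcard]
  have hb : ((univ.filter (fun a => ¬ P a)).card : ℝ) ≤ (Fintype.card α : ℝ) / x := by
    rw [le_div_iff₀ hx]; exact h
  have hkey : (1 - 1/x) * (Fintype.card α:ℝ) = (Fintype.card α:ℝ) - (Fintype.card α:ℝ)/x := by
    ring
  rw [hkey]
  linarith

set_option maxHeartbeats 4000000 in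
theorem stmt5 (c₁ : ℝ) (hc₁ : 0 < c₁) :
    ∃ C : ℝ, 0 < C ∧ ∃ n₀ : ℕ,
      ∀ (n : ℕ) [NeZero n] (mn d Δ mΔ Acard : ℕ),
        n₀ ≤ n → n = 2 ^ mn → 1 ≤ d → Δ = 2 ^ mΔ → 2 ≤ Δ →
        (Δ : ℝ) ≤ Real.log n ^ c₁ → Δ < n →
        Acard = ⌈C * Real.log (Real.log ((n : ℝ) ^ d))⌉₊ →
        1 - 1 / Real.log ((n : ℝ) ^ d) ^ 4 ≤
          ((univ.filter
              (fun A : Fin Acard → ((Fin d → ZMod n) × (Fin d → ZMod n)) =>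
                ∀ s : Fin d,
                  balanced Δ
                    (fun j => star (A j) (0, fun t => if t = s then 1 else 0)) s)).card : ℝ)
          / (Fintype.card (Fin Acard → ((Fin d → ZMod n) × (Fin d → ZMod n))) : ℝ) := by
  refine ⟨20000*(c₁+7), by positivity, 3, ?_⟩
  intro n _ mn d Δ mΔ Acard hn3 hn hd hΔpow hΔ2 hΔlog hΔn hAcard
  classical
  set L : ℝ := Real.log ((n:ℝ)^d) with hL
  have hn3' : (3:ℝ) ≤ (n:ℝ) := by exact_mod_cast hn3
  have hlogn : 1 < Real.log n := by
    rw [Real.lt_log_iff_exp_lt (by linarith)]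
    have := Real.exp_one_lt_d9
    linarith
  have hd1 : (1:ℝ) ≤ (d:ℝ) := by exact_mod_cast hd
  have hLd : L = d * Real.log n := by rw [hL, Real.log_pow]
  have hL1 : 1 < L := by rw [hLd]; nlinarith
  have hL0 : (0:ℝ) < L := by linarith
  have hlogL : 0 < Real.log L := Real.log_pos hL1
  have hm : 20000*(c₁+7) * Real.log L ≤ (Acard:ℝ) := by
    rw [hAcard]; exact Nat.le_ceil _
  -- counting
  have hcount := main_count (d' := d) (Δ := Δ) (m := Acard)
    (fun s r a => ((rootΔ Δ) ^ (r * ((a.2 s).val))).re ≤ 0)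
    (fun A => ∀ s : Fin d,
      balanced Δ (fun j => star (A j) (0, fun t => if t = s then 1 else 0)) s)
    (fun s r h1 h2 => half_card hn hΔpow hΔn hΔ2 h1 h2 s)
    (by
      intro A hA
      have hA' : ¬ ∀ s : Fin d, balanced Δ
          (fun j => star (A j) (0, fun t => if t = s then 1 else 0)) s := hA
      push_neg at hA'
      obtain ⟨s, hs⟩ := hA'
      unfold balanced at hs
      push_neg at hs
      obtain ⟨r, hr1, hr2, hlt⟩ := hs
      refine ⟨s, r, hr1, hr2, ?_⟩
      rw [not_le]
      have heq : (univ.filter (fun j : Fin Acard =>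
          ((rootΔ Δ) ^ (r * (((A j).2 s).val))).re ≤ 0)) =
        (univ.filter (fun j : Fin Acard =>
          ((rootΔ Δ) ^ (r * (((fun j => star (A j)
            (0, fun t => if t = s then 1 else 0)) j) s).val)).re ≤ 0)) :=
        Finset.filter_congr (fun j _ => by
          have hst : star (A j) (0, fun t => if t = s then 1 else 0) s = (A j).2 s := by
            show (A j).1 s * (0 : Fin d → ZMod n) s
              + (A j).2 s * (if s = s then 1 else 0) = (A j).2 s
            simp
          simp only [hst])
      rw [heq]
      exact hlt)
  -- arithmetic
  set K : ℕ := Fintype.card ((Fin d → ZMod n) × (Fin d → ZMod n)) with hK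
  have hexp2 : L ^ (c₁+(7:ℝ)) ≤ Real.exp ((Acard:ℝ)/20000) := by
    rw [Real.rpow_def_of_pos hL0, Real.exp_le_exp]
    linarith
  have hde : (d:ℝ) ≤ L := by rw [hLd]; nlinarith
  have hlogn0 : (0:ℝ) ≤ Real.log n := by linarith
  have hlognL : Real.log n ≤ L := by rw [hLd]; nlinarith
  have hΔe : (Δ:ℝ) ≤ L ^ (c₁:ℝ) := hΔlog.trans (Real.rpow_le_rpow hlogn0 hlognL hc₁.le)
  have hprod : (d:ℝ) * Δ * L^4 ≤ L ^ (c₁+(7:ℝ)) := by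
    have hΔ0' : (0:ℝ) ≤ (Δ:ℝ) := by positivity
    have hL4' : (0:ℝ) ≤ L^(4:ℕ) := by positivity
    have hLc : (0:ℝ) ≤ L ^ (c₁:ℝ) := by positivity
    have h1 : (d:ℝ) * Δ * L^4 ≤ L * L^(c₁:ℝ) * L^(4:ℕ) := by
      nlinarith [mul_le_mul hde hΔe hΔ0' hL0.le]
    have h2 : L * L^(c₁:ℝ) * L^(4:ℕ) = L ^ ((1:ℝ) + c₁ + 4) := by
      rw [← Real.rpow_natCast L 4]
      nth_rewrite 1 [← Real.rpow_one L]
      rw [← Real.rpow_add hL0, ← Real.rpow_add hL0]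
      norm_num
    calc (d:ℝ)*Δ*L^4 ≤ L ^ ((1:ℝ)+c₁+4) := by rw [← h2]; exact h1
      _ ≤ L ^ (c₁+(7:ℝ)) := Real.rpow_le_rpow_of_exponent_le hL1.le (by linarith)
  have hρexp : ((1:ℝ)-1/20000)^Acard ≤ Real.exp (-((Acard:ℝ)/20000)) := by
    have h1 : (1:ℝ)-1/20000 ≤ Real.exp (-(1/20000)) := by
      have := Real.add_one_le_exp (-(1/20000:ℝ)); linarith
    calc ((1:ℝ)-1/20000)^Acard ≤ (Real.exp (-(1/20000)))^Acard :=
        pow_le_pow_left₀ (by norm_num) h1 Acard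
      _ = Real.exp (-((Acard:ℝ)/20000)) := by rw [← Real.exp_nat_mul]; congr 1; ring
  have hKnn : (0:ℝ) ≤ ((K:ℕ):ℝ)^Acard := by positivity
  have hone : (d:ℝ) * Δ * L^4 * Real.exp (-((Acard:ℝ)/20000)) ≤ 1 := by
    rw [Real.exp_neg, ← div_eq_mul_inv, div_le_one (Real.exp_pos _)]
    exact hprod.trans hexp2
  have hcombine : ((d:ℝ) * Δ * (((1:ℝ)-1/20000)^Acard * ((K:ℕ):ℝ)^Acard)) * L^4
      ≤ ((K:ℕ):ℝ)^Acard := by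
    have hεK : ((1:ℝ)-1/20000)^Acard * ((K:ℕ):ℝ)^Acard
        ≤ Real.exp (-((Acard:ℝ)/20000)) * ((K:ℕ):ℝ)^Acard :=
      mul_le_mul_of_nonneg_right hρexp hKnn
    calc ((d:ℝ) * Δ * (((1:ℝ)-1/20000)^Acard * ((K:ℕ):ℝ)^Acard)) * L^4
        ≤ ((d:ℝ) * Δ * (Real.exp (-((Acard:ℝ)/20000)) * ((K:ℕ):ℝ)^Acard)) * L^4 := by
          apply mul_le_mul_of_nonneg_right
            (mul_le_mul_of_nonneg_left hεK (by positivity)) (by positivity)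
      _ = ((d:ℝ) * Δ * L^4 * Real.exp (-((Acard:ℝ)/20000))) * ((K:ℕ):ℝ)^Acard := by ring
      _ ≤ 1 * ((K:ℕ):ℝ)^Acard := mul_le_mul_of_nonneg_right hone hKnn
      _ = ((K:ℕ):ℝ)^Acard := one_mul _
  -- conclude
  have hTcard : Fintype.card (Fin Acard → ((Fin d → ZMod n) × (Fin d → ZMod n))) = K ^ Acard := by
    rw [hK]
    simp [Fintype.card_fun]
  have hcardeq : ((Fintype.card (Fin Acard → ((Fin d → ZMod n) × (Fin d → ZMod n))) : ℕ) : ℝ)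
      = ((K:ℕ):ℝ)^Acard := by rw [hTcard]; push_cast; ring
  have hcardpos : (0:ℝ) < ((Fintype.card (Fin Acard → ((Fin d → ZMod n) × (Fin d → ZMod n))) : ℕ) : ℝ) := by
    have h' : 0 < Fintype.card (Fin Acard → ((Fin d → ZMod n) × (Fin d → ZMod n))) :=
      Fintype.card_pos
    exact_mod_cast h'
  rw [le_div_iff₀ hcardpos]
  have hsplit : (univ.filter (fun A : Fin Acard → ((Fin d → ZMod n) × (Fin d → ZMod n)) =>
      ∀ s : Fin d, balanced Δ
        (fun j => star (A j) (0, fun t => if t = s then 1 else 0)) s)).card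
      + (univ.filter (fun A : Fin Acard → ((Fin d → ZMod n) × (Fin d → ZMod n)) =>
      ¬ ∀ s : Fin d, balanced Δ
        (fun j => star (A j) (0, fun t => if t = s then 1 else 0)) s)).card
      = Fintype.card (Fin Acard → ((Fin d → ZMod n) × (Fin d → ZMod n))) := by
    rw [Finset.card_filter_add_card_filter_not, Finset.card_univ]
  have hsplit' : ((univ.filter (fun A : Fin Acard → ((Fin d → ZMod n) × (Fin d → ZMod n)) =>
      ∀ s : Fin d, balanced Δ
        (fun j => star (A j) (0, fun t => if t = s then 1 else 0)) s)).card : ℝ)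
      + ((univ.filter (fun A : Fin Acard → ((Fin d → ZMod n) × (Fin d → ZMod n)) =>
      ¬ ∀ s : Fin d, balanced Δ
        (fun j => star (A j) (0, fun t => if t = s then 1 else 0)) s)).card : ℝ)
      = ((Fintype.card (Fin Acard → ((Fin d → ZMod n) × (Fin d → ZMod n))) : ℕ) : ℝ) := by
    exact_mod_cast hsplit
  have hbadle : ((univ.filter (fun A : Fin Acard → ((Fin d → ZMod n) × (Fin d → ZMod n)) =>
      ¬ ∀ s : Fin d, balanced Δ
        (fun j => star (A j) (0, fun t => if t = s then 1 else 0)) s)).card : ℝ) * L^4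
      ≤ ((Fintype.card (Fin Acard → ((Fin d → ZMod n) × (Fin d → ZMod n))) : ℕ) : ℝ) := by
    calc ((univ.filter (fun A : Fin Acard → ((Fin d → ZMod n) × (Fin d → ZMod n)) =>
        ¬ ∀ s : Fin d, balanced Δ
          (fun j => star (A j) (0, fun t => if t = s then 1 else 0)) s)).card : ℝ) * L^4
        ≤ ((d:ℝ) * Δ * (((1:ℝ)-1/20000)^Acard * ((K:ℕ):ℝ)^Acard)) * L^4 := by
          apply mul_le_mul_of_nonneg_right _ (by positivity)
          exact_mod_cast hcount
      _ ≤ ((K:ℕ):ℝ)^Acard := hcombine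
      _ = _ := hcardeq.symm
  have hL4pos : (0:ℝ) < L^4 := by positivity
  have hb : ((univ.filter (fun A : Fin Acard → ((Fin d → ZMod n) × (Fin d → ZMod n)) =>
      ¬ ∀ s : Fin d, balanced Δ
        (fun j => star (A j) (0, fun t => if t = s then 1 else 0)) s)).card : ℝ)
      ≤ ((Fintype.card (Fin Acard → ((Fin d → ZMod n) × (Fin d → ZMod n))) : ℕ) : ℝ) / L^4 := by
    rw [le_div_iff₀ hL4pos]
    exact hbadle
  have hkey : (1 - 1/L^4) * ((Fintype.card (Fin Acard → ((Fin d → ZMod n) × (Fin d → ZMod n))) : ℕ) : ℝ)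
      = ((Fintype.card (Fin Acard → ((Fin d → ZMod n) × (Fin d → ZMod n))) : ℕ) : ℝ)
        - ((Fintype.card (Fin Acard → ((Fin d → ZMod n) × (Fin d → ZMod n))) : ℕ) : ℝ) / L^4 := by
    ring
  rw [hkey]
  linarith
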